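/- Assume d ≥ 1, L ≥ 1, γ > 0, λ > 0. There exists ᾱ > 0 such that for every step size α with 0 < α ≤ ᾱ, the PGD map g_α is injective on [−1, 1]². -/

import Mathlib

open MeasureTheory ProbabilityTheory Real Filter

noncomputable def erf (u : ℝ) : ℝ := 2 / Real.sqrt Real.pi * ∫ r in (0:ℝ)..u, Real.exp (-r ^ 2)

noncomputable def zeta (t s : ℝ) : ℝ := ∫ g, erf (t + g) ^ 2 ∂(gaussianReal 0 s.toNNReal)

/-- The reduced risk `R(κ, ν)` on the invariant manifold. -/
noncomputable def Rred (d L : ℕ) (γ lam ε : ℝ) (κ ν : ℝ) : ℝ :=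
  γ ^ 2 - 2 * γ ^ 2 * ν * erf (lam * Real.sqrt ((d : ℝ) / 2) * κ /
      Real.sqrt (1 + 2 * lam ^ 2 * γ ^ 2))
    + γ ^ 2 * zeta (lam * Real.sqrt ((d : ℝ) / 2) * κ) (lam ^ 2 * γ ^ 2)
    + ((L : ℝ) - 1) * zeta 0 (lam ^ 2) + ε ^ 2

/-- Partial derivative `∂κR` of the reduced risk with respect to its first argument. -/
noncomputable def dkR (d L : ℕ) (γ lam ε : ℝ) (κ ν : ℝ) : ℝ :=
  deriv (fun x => Rred d L γ lam ε x ν) κ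

/-- Partial derivative `∂νR` of the reduced risk with respect to its second argument. -/
noncomputable def dvR (d L : ℕ) (γ lam ε : ℝ) (κ ν : ℝ) : ℝ :=
  deriv (fun y => Rred d L γ lam ε κ y) ν

/-- The PGD map `g_α`. -/
noncomputable def pgd (d L : ℕ) (γ lam ε α : ℝ) (p : ℝ × ℝ) : ℝ × ℝ :=
  ((p.1 - α * dkR d L γ lam ε p.1 p.2 * (1 - p.1 ^ 2)) /
      Real.sqrt (1 + α ^ 2 * (dkR d L γ lam ε p.1 p.2) ^ 2 * (1 - p.1 ^ 2)),
   (p.2 - α * dvR d L γ lam ε p.1 p.2 * (1 - p.2 ^ 2)) /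
      Real.sqrt (1 + α ^ 2 * (dvR d L γ lam ε p.1 p.2) ^ 2 * (1 - p.2 ^ 2)))

/-- The square `[−1, 1]²`. -/
def sqIcc : Set (ℝ × ℝ) := {p | p.1 ∈ Set.Icc (-1 : ℝ) 1 ∧ p.2 ∈ Set.Icc (-1 : ℝ) 1}

noncomputable def Eg (u : ℝ) : ℝ := 2 / Real.sqrt Real.pi * Real.exp (-u ^ 2)

lemma sqrt_pi_ge_one : 1 ≤ Real.sqrt Real.pi := by
  rw [show (1:ℝ) = Real.sqrt 1 by simp]
  exact Real.sqrt_le_sqrt (by linarith [Real.pi_gt_three])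

lemma sqrt_pi_pos : 0 < Real.sqrt Real.pi := lt_of_lt_of_le one_pos sqrt_pi_ge_one

lemma coef_le_two : 2 / Real.sqrt Real.pi ≤ 2 := by
  rw [div_le_iff₀ sqrt_pi_pos]; nlinarith [sqrt_pi_ge_one]

lemma cont_gauss : Continuous fun r : ℝ => Real.exp (-r ^ 2) := by continuity

lemma hasDerivAt_erf (u : ℝ) : HasDerivAt erf (Eg u) u := by
  have h := intervalIntegral.integral_hasDerivAt_right
    (cont_gauss.intervalIntegrable 0 u)
    (cont_gauss.stronglyMeasurableAtFilter _ _)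
    cont_gauss.continuousAt
  exact h.const_mul (2 / Real.sqrt Real.pi)

lemma continuous_erf : Continuous erf :=
  continuous_iff_continuousAt.2 fun u => (hasDerivAt_erf u).continuousAt

lemma Eg_abs_le : ∀ u : ℝ, |Eg u| ≤ 2 := by
  intro u
  have h1 : Real.exp (-u ^ 2) ≤ 1 := Real.exp_le_one_iff.2 (neg_nonpos.2 (sq_nonneg u))
  have h2 : 0 < Real.exp (-u ^ 2) := Real.exp_pos _
  rw [Eg, abs_of_nonneg (by positivity)]
  nlinarith [coef_le_two, sqrt_pi_pos]

lemma int_gauss : Integrable (fun r : ℝ => Real.exp (-r ^ 2)) := by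
  have := integrable_exp_neg_mul_sq (b := 1) one_pos
  simpa using this

lemma abs_erf_le_two (u : ℝ) : |erf u| ≤ 2 := by
  have hb : |∫ r in (0:ℝ)..u, Real.exp (-r ^ 2)| ≤ Real.sqrt Real.pi := by
    have h1 : |∫ r in (0:ℝ)..u, Real.exp (-r ^ 2)|
        ≤ ∫ r in Set.uIoc 0 u, |Real.exp (-r ^ 2)| := by
      simpa [Real.norm_eq_abs] using
        intervalIntegral.norm_integral_le_integral_norm_uIoc (f := fun r : ℝ => Real.exp (-r ^ 2)) (a := 0) (b := u)
    have h2 : (∫ r in Set.uIoc 0 u, |Real.exp (-r ^ 2)|)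
        ≤ ∫ r : ℝ, Real.exp (-r ^ 2) := by
      simp_rw [abs_of_pos (Real.exp_pos _)]
      exact setIntegral_le_integral int_gauss (Filter.Eventually.of_forall fun r => (Real.exp_pos _).le)
    have h3 : (∫ r : ℝ, Real.exp (-r ^ 2)) = Real.sqrt Real.pi := by
      have := integral_gaussian (1 : ℝ)
      simpa using this
    linarith
  rw [erf, abs_mul]
  have : |2 / Real.sqrt Real.pi| = 2 / Real.sqrt Real.pi := abs_of_pos (by positivity)
  rw [this]
  calc 2 / Real.sqrt Real.pi * |∫ r in (0:ℝ)..u, Real.exp (-r ^ 2)|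
      ≤ 2 / Real.sqrt Real.pi * Real.sqrt Real.pi := by
        apply mul_le_mul_of_nonneg_left hb (by positivity)
    _ = 2 := by field_simp

lemma erf_lipschitz (u v : ℝ) : |erf u - erf v| ≤ 2 * |u - v| := by
  have := Convex.norm_image_sub_le_of_norm_hasDerivWithin_le
    (f := erf) (f' := Eg) (s := Set.univ) (C := 2)
    (fun x _ => (hasDerivAt_erf x).hasDerivWithinAt)
    (fun x _ => by simpa [Real.norm_eq_abs] using Eg_abs_le x)
    convex_univ (Set.mem_univ v) (Set.mem_univ u)
  simpa [Real.norm_eq_abs] using this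

lemma abs_mul_exp_le (u : ℝ) : |u| * Real.exp (-u ^ 2) ≤ 1 / 2 := by
  have h1 : u ^ 2 + 1 ≤ Real.exp (u ^ 2) := Real.add_one_le_exp _
  have h2 : 2 * |u| ≤ u ^ 2 + 1 := by nlinarith [sq_nonneg (|u| - 1), sq_abs u]
  have h3 : Real.exp (-u ^ 2) = (Real.exp (u ^ 2))⁻¹ := by rw [← Real.exp_neg]
  rw [h3]
  have hp : 0 < Real.exp (u ^ 2) := Real.exp_pos _
  rw [mul_inv_le_iff₀ hp]
  nlinarith [abs_nonneg u]

lemma hasDerivAt_Eg (u : ℝ) : HasDerivAt Eg (2 / Real.sqrt Real.pi * (Real.exp (-u ^ 2) * (-(2 * u)))) u := by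
  have h1 : HasDerivAt (fun x : ℝ => -x ^ 2) (-(2 * u)) u := by
    exact ((hasDerivAt_pow 2 u).neg).congr_deriv (by norm_num)
  have h2 := (h1.exp).const_mul (2 / Real.sqrt Real.pi)
  have : Eg = fun x : ℝ => 2 / Real.sqrt Real.pi * Real.exp (-x ^ 2) := rfl
  rw [this]
  exact h2

lemma Eg_deriv_abs_le (u : ℝ) : |2 / Real.sqrt Real.pi * (Real.exp (-u ^ 2) * (-(2 * u)))| ≤ 2 := by
  have h := abs_mul_exp_le u
  have hc : |2 / Real.sqrt Real.pi| ≤ 2 := by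
    rw [abs_of_pos (by positivity)]; exact coef_le_two
  have he : 0 < Real.exp (-u ^ 2) := Real.exp_pos _
  rw [abs_mul, abs_mul]
  have : |Real.exp (-u ^ 2)| * |(-(2 * u))| ≤ 1 := by
    rw [abs_of_pos he, abs_neg, abs_mul, abs_two]
    nlinarith
  nlinarith [abs_nonneg (2 / Real.sqrt Real.pi), abs_nonneg (Real.exp (-u^2)), abs_nonneg (-(2*u)),
    mul_nonneg (abs_nonneg (Real.exp (-u^2))) (abs_nonneg (-(2*u)))]

lemma Eg_lipschitz (u v : ℝ) : |Eg u - Eg v| ≤ 2 * |u - v| := by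
  have := Convex.norm_image_sub_le_of_norm_hasDerivWithin_le
    (f := Eg) (f' := fun x => 2 / Real.sqrt Real.pi * (Real.exp (-x ^ 2) * (-(2 * x)))) (s := Set.univ) (C := 2)
    (fun x _ => (hasDerivAt_Eg x).hasDerivWithinAt)
    (fun x _ => by rw [Real.norm_eq_abs]; exact Eg_deriv_abs_le x)
    convex_univ (Set.mem_univ v) (Set.mem_univ u)
  simpa [Real.norm_eq_abs] using this

noncomputable def f0 (u : ℝ) : ℝ := 2 * (erf u * Eg u)

lemma hasDerivAt_erfsq (u : ℝ) : HasDerivAt (fun t : ℝ => erf t ^ 2) (f0 u) u := by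
  have h := (hasDerivAt_erf u).pow 2
  exact h.congr_deriv (by rw [f0]; norm_num; ring)

lemma f0_abs_le (u : ℝ) : |f0 u| ≤ 8 := by
  rw [f0, abs_mul, abs_mul, abs_two]
  nlinarith [abs_erf_le_two u, Eg_abs_le u, abs_nonneg (erf u), abs_nonneg (Eg u)]

lemma hasDerivAt_f0 (u : ℝ) :
    HasDerivAt f0 (2 * (Eg u * Eg u + erf u * (2 / Real.sqrt Real.pi * (Real.exp (-u ^ 2) * (-(2 * u)))))) u := by
  exact (((hasDerivAt_erf u).mul (hasDerivAt_Eg u))).const_mul 2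

lemma f0_deriv_abs_le (u : ℝ) :
    |2 * (Eg u * Eg u + erf u * (2 / Real.sqrt Real.pi * (Real.exp (-u ^ 2) * (-(2 * u)))))| ≤ 16 := by
  have h1 := Eg_abs_le u
  have h2 := abs_erf_le_two u
  have h3 := Eg_deriv_abs_le u
  rw [abs_mul, abs_two]
  have h4 : |Eg u * Eg u + erf u * (2 / Real.sqrt Real.pi * (Real.exp (-u ^ 2) * (-(2 * u))))| ≤ 8 := by
    calc _ ≤ |Eg u * Eg u| + |erf u * (2 / Real.sqrt Real.pi * (Real.exp (-u ^ 2) * (-(2 * u))))| := abs_add_le _ _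
      _ ≤ 8 := by
        rw [abs_mul, abs_mul]
        nlinarith [abs_nonneg (Eg u), abs_nonneg (erf u),
          abs_nonneg (2 / Real.sqrt Real.pi * (Real.exp (-u ^ 2) * (-(2 * u))))]
  linarith

lemma f0_lipschitz (u v : ℝ) : |f0 u - f0 v| ≤ 16 * |u - v| := by
  have := Convex.norm_image_sub_le_of_norm_hasDerivWithin_le
    (f := f0)
    (f' := fun x => 2 * (Eg x * Eg x + erf x * (2 / Real.sqrt Real.pi * (Real.exp (-x ^ 2) * (-(2 * x)))))) (s := Set.univ) (C := 16)
    (fun x _ => (hasDerivAt_f0 x).hasDerivWithinAt)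
    (fun x _ => by rw [Real.norm_eq_abs]; exact f0_deriv_abs_le x)
    convex_univ (Set.mem_univ v) (Set.mem_univ u)
  simpa [Real.norm_eq_abs] using this

lemma continuous_Eg : Continuous Eg := by
  have : Eg = fun x : ℝ => 2 / Real.sqrt Real.pi * Real.exp (-x ^ 2) := rfl
  rw [this]; continuity

lemma continuous_f0 : Continuous f0 := by
  unfold f0; exact (continuous_const.mul (continuous_erf.mul continuous_Eg))

section Zint
variable (μ : Measure ℝ) [IsProbabilityMeasure μ]

lemma integrable_comp_add {h : ℝ → ℝ} (hc : Continuous h) {C : ℝ} (hb : ∀ u, |h u| ≤ C) (t : ℝ) :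
    Integrable (fun g => h (t + g)) μ := by
  refine Integrable.mono' (integrable_const C) ((hc.comp (continuous_const.add continuous_id)).aestronglyMeasurable) ?_
  exact Filter.Eventually.of_forall fun g => by simpa [Real.norm_eq_abs] using hb (t + g)

noncomputable def Zf (t : ℝ) : ℝ := ∫ g, erf (t + g) ^ 2 ∂μ
noncomputable def Df (t : ℝ) : ℝ := ∫ g, f0 (t + g) ∂μ

lemma hasDerivAt_Zf (t : ℝ) : HasDerivAt (Zf μ) (Df μ t) t := by
  have key := hasDerivAt_integral_of_dominated_loc_of_deriv_le (μ := μ)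
    (F := fun x g => erf (x + g) ^ 2) (F' := fun x g => f0 (x + g))
    (x₀ := t) (s := Metric.ball t 1) (bound := fun _ => 8) (Metric.ball_mem_nhds t one_pos)
    (Filter.Eventually.of_forall fun x =>
      ((continuous_erf.comp (continuous_const.add continuous_id)).pow 2).aestronglyMeasurable)
    (integrable_comp_add μ (continuous_erf.pow 2) (C := 4)
      (fun u => by rw [Pi.pow_apply, abs_pow]; nlinarith [abs_erf_le_two u, abs_nonneg (erf u)]) t)
    ((continuous_f0.comp (continuous_const.add continuous_id)).aestronglyMeasurable)
    (Filter.Eventually.of_forall fun g x _ => by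
      simpa [Real.norm_eq_abs] using f0_abs_le (x + g))
    (integrable_const 8)
    (Filter.Eventually.of_forall fun g x _ => by
      have h := (hasDerivAt_erfsq (x + g)).comp x ((hasDerivAt_id x).add_const g)
      simpa [Function.comp_def] using h)
  exact key.2

lemma Df_abs_le (t : ℝ) : |Df μ t| ≤ 8 := by
  rw [Df, ← Real.norm_eq_abs]
  have := norm_integral_le_of_norm_le_const (μ := μ) (f := fun g => f0 (t + g)) (C := 8)
    (Filter.Eventually.of_forall fun g => by simpa [Real.norm_eq_abs] using f0_abs_le (t + g))
  simpa using this

lemma Df_lipschitz (t₁ t₂ : ℝ) : |Df μ t₁ - Df μ t₂| ≤ 16 * |t₁ - t₂| := by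
  have hi : ∀ t : ℝ, Integrable (fun g => f0 (t + g)) μ :=
    fun t => integrable_comp_add μ continuous_f0 f0_abs_le t
  rw [Df, Df, ← integral_sub (hi t₁) (hi t₂), ← Real.norm_eq_abs]
  have := norm_integral_le_of_norm_le_const (μ := μ)
    (f := fun g => f0 (t₁ + g) - f0 (t₂ + g)) (C := 16 * |t₁ - t₂|)
    (Filter.Eventually.of_forall fun g => by
      rw [Real.norm_eq_abs]
      have := f0_lipschitz (t₁ + g) (t₂ + g)
      simpa using this)
  simpa using this

end Zint

noncomputable def Phi (x a : ℝ) : ℝ := (x - a * (1 - x ^ 2)) / Real.sqrt (1 + a ^ 2 * (1 - x ^ 2))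

lemma sqrt_term_pos (x a : ℝ) (hx : x ∈ Set.Icc (-1:ℝ) 1) : (0:ℝ) < 1 + a ^ 2 * (1 - x ^ 2) := by
  obtain ⟨h1, h2⟩ := hx
  nlinarith [mul_nonneg (sq_nonneg a) (show (0:ℝ) ≤ 1 - x ^ 2 by nlinarith)]

lemma one_le_sqrt_term (x a : ℝ) (hx : x ∈ Set.Icc (-1:ℝ) 1) :
    1 ≤ Real.sqrt (1 + a ^ 2 * (1 - x ^ 2)) := by
  have h : (1:ℝ) ≤ 1 + a ^ 2 * (1 - x ^ 2) := by
    obtain ⟨h1, h2⟩ := hx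
    nlinarith [mul_nonneg (sq_nonneg a) (show (0:ℝ) ≤ 1 - x ^ 2 by nlinarith)]
  have := Real.sqrt_le_sqrt h
  simpa using this

-- derivative of Phi in the a-variable, closed form
lemma hasDerivAt_Phi_a (y : ℝ) (hy : y ∈ Set.Icc (-1:ℝ) 1) (a : ℝ) :
    HasDerivAt (fun a => Phi y a)
      (-((1 - y ^ 2) * (1 + a * y)) / Real.sqrt (1 + a ^ 2 * (1 - y ^ 2)) ^ 3) a := by
  have hpos : (0:ℝ) < 1 + a ^ 2 * (1 - y ^ 2) := sqrt_term_pos y a hy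
  have hs0 : 0 < Real.sqrt (1 + a ^ 2 * (1 - y ^ 2)) := Real.sqrt_pos.2 hpos
  have hs2 : Real.sqrt (1 + a ^ 2 * (1 - y ^ 2)) ^ 2 = 1 + a ^ 2 * (1 - y ^ 2) :=
    Real.sq_sqrt hpos.le
  have hN : HasDerivAt (fun a : ℝ => y - a * (1 - y ^ 2)) (-(1 - y ^ 2)) a := by
    have := ((hasDerivAt_id a).mul_const (1 - y ^ 2)).const_sub y
    exact this.congr_deriv (by ring)
  have hDen : HasDerivAt (fun a : ℝ => 1 + a ^ 2 * (1 - y ^ 2)) (2 * a * (1 - y ^ 2)) a := by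
    have := ((hasDerivAt_pow 2 a).mul_const (1 - y ^ 2)).const_add 1
    exact this.congr_deriv (by norm_num)
  have hS : HasDerivAt (fun a : ℝ => Real.sqrt (1 + a ^ 2 * (1 - y ^ 2)))
      (2 * a * (1 - y ^ 2) / (2 * Real.sqrt (1 + a ^ 2 * (1 - y ^ 2)))) a := hDen.sqrt hpos.ne'
  have h := hN.div hS hs0.ne'
  have heq : (-(1 - y ^ 2) * Real.sqrt (1 + a ^ 2 * (1 - y ^ 2)) -
        (y - a * (1 - y ^ 2)) * (2 * a * (1 - y ^ 2) / (2 * Real.sqrt (1 + a ^ 2 * (1 - y ^ 2))))) /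
        Real.sqrt (1 + a ^ 2 * (1 - y ^ 2)) ^ 2
      = -((1 - y ^ 2) * (1 + a * y)) / Real.sqrt (1 + a ^ 2 * (1 - y ^ 2)) ^ 3 := by
    have key : ∀ s : ℝ, 0 < s → s ^ 2 = 1 + a ^ 2 * (1 - y ^ 2) →
        (-(1 - y ^ 2) * s - (y - a * (1 - y ^ 2)) * (2 * a * (1 - y ^ 2) / (2 * s))) / s ^ 2
          = -((1 - y ^ 2) * (1 + a * y)) / s ^ 3 := by
      intro s hs hs2
      have step1 : (-(1 - y ^ 2) * s - (y - a * (1 - y ^ 2)) * (2 * a * (1 - y ^ 2) / (2 * s))) / s ^ 2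
          = (-(1 - y ^ 2) * s ^ 2 - (y - a * (1 - y ^ 2)) * (a * (1 - y ^ 2))) / s ^ 3 := by
        field_simp
      have step2 : -(1 - y ^ 2) * s ^ 2 - (y - a * (1 - y ^ 2)) * (a * (1 - y ^ 2))
          = -((1 - y ^ 2) * (1 + a * y)) := by
        rw [hs2]; ring
      rw [step1, step2]
    exact key _ hs0 hs2
  rw [heq] at h
  exact h

lemma cube_ge_one {s : ℝ} (hs : 1 ≤ s) : 1 ≤ s ^ 3 := by
  have h2 : 1 ≤ s ^ 2 := by nlinarith
  nlinarith [mul_le_mul h2 hs zero_le_one (by nlinarith : (0:ℝ) ≤ s ^ 2)]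

lemma Phi_lipschitz_a (y : ℝ) (hy : y ∈ Set.Icc (-1:ℝ) 1) (a b : ℝ)
    (ha : |a| ≤ 1) (hb : |b| ≤ 1) : |Phi y a - Phi y b| ≤ 2 * |a - b| := by
  have key : ∀ t ∈ Set.Icc (-1:ℝ) 1,
      |(-((1 - y ^ 2) * (1 + t * y)) / Real.sqrt (1 + t ^ 2 * (1 - y ^ 2)) ^ 3)| ≤ 2 := by
    intro t ht
    have hat : |t| ≤ 1 := abs_le.2 ⟨ht.1, ht.2⟩
    have hs1 : 1 ≤ Real.sqrt (1 + t ^ 2 * (1 - y ^ 2)) := one_le_sqrt_term y t hy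
    have hs3 : 1 ≤ Real.sqrt (1 + t ^ 2 * (1 - y ^ 2)) ^ 3 := cube_ge_one hs1
    rw [abs_div]
    have hnum : |(-((1 - y ^ 2) * (1 + t * y)))| ≤ 2 := by
      rw [abs_neg, abs_mul]
      have h1 : |1 - y ^ 2| ≤ 1 := by
        rw [abs_le]; constructor <;> nlinarith [hy.1, hy.2, sq_nonneg y]
      have hay : |y| ≤ 1 := abs_le.2 ⟨hy.1, hy.2⟩
      have h2 : |1 + t * y| ≤ 1 + |t| * |y| := by
        calc |1 + t * y| ≤ |1| + |t * y| := abs_add_le _ _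
          _ = 1 + |t| * |y| := by rw [abs_one, abs_mul]
      have h3 : |1 + t * y| ≤ 2 := by nlinarith [abs_nonneg t, abs_nonneg y]
      calc |1 - y ^ 2| * |1 + t * y| ≤ 1 * 2 :=
            mul_le_mul h1 h3 (abs_nonneg _) zero_le_one
        _ = 2 := by norm_num
    rw [abs_of_pos (lt_of_lt_of_le one_pos hs3), div_le_iff₀ (lt_of_lt_of_le one_pos hs3)]
    nlinarith
  have := Convex.norm_image_sub_le_of_norm_hasDerivWithin_le
    (f := fun a => Phi y a)
    (f' := fun t => -((1 - y ^ 2) * (1 + t * y)) / Real.sqrt (1 + t ^ 2 * (1 - y ^ 2)) ^ 3)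
    (s := Set.Icc (-1:ℝ) 1) (C := 2)
    (fun t _ => (hasDerivAt_Phi_a y hy t).hasDerivWithinAt)
    (fun t ht => by rw [Real.norm_eq_abs]; exact key t ht)
    (convex_Icc _ _) (Set.mem_Icc.2 (abs_le.1 hb)) (Set.mem_Icc.2 (abs_le.1 ha))
  simpa [Real.norm_eq_abs] using this

lemma hasDerivAt_Phi_x (a : ℝ) (x : ℝ) (hx : x ∈ Set.Icc (-1:ℝ) 1) :
    HasDerivAt (fun x => Phi x a - x)
      ((1 + 2 * a * x + a ^ 2 + a ^ 3 * x * (1 - x ^ 2)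
          - Real.sqrt (1 + a ^ 2 * (1 - x ^ 2)) ^ 3) / Real.sqrt (1 + a ^ 2 * (1 - x ^ 2)) ^ 3) x := by
  have hpos : (0:ℝ) < 1 + a ^ 2 * (1 - x ^ 2) := sqrt_term_pos x a hx
  have hs0 : 0 < Real.sqrt (1 + a ^ 2 * (1 - x ^ 2)) := Real.sqrt_pos.2 hpos
  have hs2 : Real.sqrt (1 + a ^ 2 * (1 - x ^ 2)) ^ 2 = 1 + a ^ 2 * (1 - x ^ 2) :=
    Real.sq_sqrt hpos.le
  have hN : HasDerivAt (fun x : ℝ => x - a * (1 - x ^ 2)) (1 + 2 * a * x) x := by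
    have := (hasDerivAt_id x).sub (((hasDerivAt_pow 2 x).const_sub 1).const_mul a)
    exact this.congr_deriv (by norm_num; ring)
  have hDen : HasDerivAt (fun x : ℝ => 1 + a ^ 2 * (1 - x ^ 2)) (a ^ 2 * (-(2 * x))) x := by
    have := (((hasDerivAt_pow 2 x).const_sub 1).const_mul (a ^ 2)).const_add 1
    exact this.congr_deriv (by norm_num)
  have hS : HasDerivAt (fun x : ℝ => Real.sqrt (1 + a ^ 2 * (1 - x ^ 2)))
      (a ^ 2 * (-(2 * x)) / (2 * Real.sqrt (1 + a ^ 2 * (1 - x ^ 2)))) x := hDen.sqrt hpos.ne'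
  have h := (hN.div hS hs0.ne').sub (hasDerivAt_id x)
  have heq : ((1 + 2 * a * x) * Real.sqrt (1 + a ^ 2 * (1 - x ^ 2)) -
        (x - a * (1 - x ^ 2)) * (a ^ 2 * (-(2 * x)) / (2 * Real.sqrt (1 + a ^ 2 * (1 - x ^ 2))))) /
        Real.sqrt (1 + a ^ 2 * (1 - x ^ 2)) ^ 2 - 1
      = (1 + 2 * a * x + a ^ 2 + a ^ 3 * x * (1 - x ^ 2)
          - Real.sqrt (1 + a ^ 2 * (1 - x ^ 2)) ^ 3) / Real.sqrt (1 + a ^ 2 * (1 - x ^ 2)) ^ 3 := by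
    have key : ∀ s : ℝ, 0 < s → s ^ 2 = 1 + a ^ 2 * (1 - x ^ 2) →
        ((1 + 2 * a * x) * s - (x - a * (1 - x ^ 2)) * (a ^ 2 * (-(2 * x)) / (2 * s))) / s ^ 2 - 1
          = (1 + 2 * a * x + a ^ 2 + a ^ 3 * x * (1 - x ^ 2) - s ^ 3) / s ^ 3 := by
      intro s hs hs2
      have step1 : ((1 + 2 * a * x) * s - (x - a * (1 - x ^ 2)) * (a ^ 2 * (-(2 * x)) / (2 * s))) / s ^ 2 - 1
          = ((1 + 2 * a * x) * s ^ 2 + a ^ 2 * x * (x - a * (1 - x ^ 2)) - s ^ 3) / s ^ 3 := by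
        field_simp
        ring
      have step2 : (1 + 2 * a * x) * s ^ 2 + a ^ 2 * x * (x - a * (1 - x ^ 2))
          = 1 + 2 * a * x + a ^ 2 + a ^ 3 * x * (1 - x ^ 2) := by
        rw [hs2]; ring
      rw [step1, step2]
    exact key _ hs0 hs2
  rw [heq] at h
  exact h

set_option maxHeartbeats 1000000 in
lemma Phi_deriv_x_bound (a x : ℝ) (ha : |a| ≤ 1) (hx : x ∈ Set.Icc (-1:ℝ) 1) :
    |(1 + 2 * a * x + a ^ 2 + a ^ 3 * x * (1 - x ^ 2)
        - Real.sqrt (1 + a ^ 2 * (1 - x ^ 2)) ^ 3) / Real.sqrt (1 + a ^ 2 * (1 - x ^ 2)) ^ 3|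
      ≤ 7 * |a| := by
  have hpos : (0:ℝ) < 1 + a ^ 2 * (1 - x ^ 2) := sqrt_term_pos x a hx
  have hs0 : 0 < Real.sqrt (1 + a ^ 2 * (1 - x ^ 2)) := Real.sqrt_pos.2 hpos
  have hs1 : 1 ≤ Real.sqrt (1 + a ^ 2 * (1 - x ^ 2)) := one_le_sqrt_term x a hx
  have hs2 : Real.sqrt (1 + a ^ 2 * (1 - x ^ 2)) ^ 2 = 1 + a ^ 2 * (1 - x ^ 2) :=
    Real.sq_sqrt hpos.le
  set s := Real.sqrt (1 + a ^ 2 * (1 - x ^ 2)) with hsdef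
  have hs3 : 1 ≤ s ^ 3 := cube_ge_one hs1
  have hax : |x| ≤ 1 := abs_le.2 ⟨hx.1, hx.2⟩
  have ha2 : a ^ 2 ≤ |a| := by nlinarith [sq_abs a, abs_nonneg a]
  have hc0 : (0:ℝ) ≤ 1 - x ^ 2 := by nlinarith [hx.1, hx.2]
  have hc1 : 1 - x ^ 2 ≤ 1 := by nlinarith [sq_nonneg x]
  -- s^3 ≤ 1 + 3 a^2
  have hSle : s ≤ 1 + a ^ 2 * (1 - x ^ 2) := by nlinarith [hs1, hs2]
  have e3 : s ^ 3 = s * (1 + a ^ 2 * (1 - x ^ 2)) := by rw [← hs2]; ring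
  have hcube : s ^ 3 ≤ 1 + 3 * a ^ 2 := by
    have h1 : s ^ 3 ≤ (1 + a ^ 2 * (1 - x ^ 2)) ^ 2 := by
      rw [e3]; nlinarith [hSle, hpos]
    have hu : a ^ 2 * (1 - x ^ 2) ≤ a ^ 2 := by nlinarith [sq_nonneg a, sq_nonneg x]
    have hu0 : 0 ≤ a ^ 2 * (1 - x ^ 2) := mul_nonneg (sq_nonneg a) hc0
    have hu1 : a ^ 2 * (1 - x ^ 2) ≤ 1 := by nlinarith [ha2, abs_nonneg a, ha]
    nlinarith [h1, hu, hu0, hu1]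
  -- |num - 1| ≤ 4 |a|
  have hnum : |2 * a * x + a ^ 2 + a ^ 3 * x * (1 - x ^ 2)| ≤ 4 * |a| := by
    have e1 : |2 * a * x| ≤ 2 * |a| := by
      rw [abs_mul, abs_mul, abs_two]
      nlinarith [abs_nonneg a, abs_nonneg x, hax]
    have e2 : |a ^ 2| ≤ |a| := by rw [abs_of_nonneg (sq_nonneg a)]; exact ha2
    have e3' : |a ^ 3 * x * (1 - x ^ 2)| ≤ |a| := by
      rw [abs_mul, abs_mul]
      have h1 : |a ^ 3| ≤ |a| := by
        rw [pow_succ, abs_mul]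
        nlinarith [abs_nonneg a, ha2, e2, abs_nonneg (a^2)]
      have h2 : |1 - x ^ 2| ≤ 1 := by rw [abs_of_nonneg hc0]; exact hc1
      nlinarith [abs_nonneg (a ^ 3), abs_nonneg x, abs_nonneg (1 - x ^ 2), hax, h1, h2,
        mul_nonneg (abs_nonneg (a^3)) (abs_nonneg x)]
    calc |2 * a * x + a ^ 2 + a ^ 3 * x * (1 - x ^ 2)|
        ≤ |2 * a * x + a ^ 2| + |a ^ 3 * x * (1 - x ^ 2)| := abs_add_le _ _
      _ ≤ |2 * a * x| + |a ^ 2| + |a ^ 3 * x * (1 - x ^ 2)| := by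
          nlinarith [abs_add_le (2 * a * x) (a ^ 2)]
      _ ≤ 4 * |a| := by linarith
  have hnum2 : |1 + 2 * a * x + a ^ 2 + a ^ 3 * x * (1 - x ^ 2) - s ^ 3| ≤ 7 * |a| := by
    have t1 : |1 + 2 * a * x + a ^ 2 + a ^ 3 * x * (1 - x ^ 2) - s ^ 3|
        ≤ |2 * a * x + a ^ 2 + a ^ 3 * x * (1 - x ^ 2)| + |s ^ 3 - 1| := by
      calc |1 + 2 * a * x + a ^ 2 + a ^ 3 * x * (1 - x ^ 2) - s ^ 3|
          = |(2 * a * x + a ^ 2 + a ^ 3 * x * (1 - x ^ 2)) - (s ^ 3 - 1)| := by ring_nf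
        _ ≤ |2 * a * x + a ^ 2 + a ^ 3 * x * (1 - x ^ 2)| + |s ^ 3 - 1| := abs_sub _ _
    have t2 : |s ^ 3 - 1| ≤ 3 * |a| := by
      rw [abs_of_nonneg (by linarith)]
      nlinarith [hcube, ha2]
    linarith
  rw [abs_div, abs_of_pos (lt_of_lt_of_le one_pos hs3),
    div_le_iff₀ (lt_of_lt_of_le one_pos hs3)]
  nlinarith [hnum2, hs3, abs_nonneg a]

lemma Phi_pert_x (a : ℝ) (ha : |a| ≤ 1) (x y : ℝ)
    (hx : x ∈ Set.Icc (-1:ℝ) 1) (hy : y ∈ Set.Icc (-1:ℝ) 1) :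
    |Phi x a - Phi y a - (x - y)| ≤ 7 * |a| * |x - y| := by
  have := Convex.norm_image_sub_le_of_norm_hasDerivWithin_le
    (f := fun x => Phi x a - x)
    (f' := fun t => (1 + 2 * a * t + a ^ 2 + a ^ 3 * t * (1 - t ^ 2)
        - Real.sqrt (1 + a ^ 2 * (1 - t ^ 2)) ^ 3) / Real.sqrt (1 + a ^ 2 * (1 - t ^ 2)) ^ 3)
    (s := Set.Icc (-1:ℝ) 1) (C := 7 * |a|)
    (fun t ht => (hasDerivAt_Phi_x a t ht).hasDerivWithinAt)
    (fun t ht => by rw [Real.norm_eq_abs]; exact Phi_deriv_x_bound a t ha ht)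
    (convex_Icc _ _) hy hx
  rw [Real.norm_eq_abs, Real.norm_eq_abs] at this
  calc |Phi x a - Phi y a - (x - y)| = |Phi x a - x - (Phi y a - y)| := by ring_nf
    _ ≤ 7 * |a| * |x - y| := this


lemma hasDerivAt_Rred_v (d L : ℕ) (γ lam ε κ ν : ℝ) :
    HasDerivAt (fun y => Rred d L γ lam ε κ y)
      (-(2 * γ ^ 2 * erf (lam * Real.sqrt ((d : ℝ) / 2) * κ /
          Real.sqrt (1 + 2 * lam ^ 2 * γ ^ 2)))) ν := by
  have h1 : HasDerivAt (fun y : ℝ => 2 * γ ^ 2 * y * erf (lam * Real.sqrt ((d : ℝ) / 2) * κ /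
        Real.sqrt (1 + 2 * lam ^ 2 * γ ^ 2)))
      (2 * γ ^ 2 * erf (lam * Real.sqrt ((d : ℝ) / 2) * κ /
        Real.sqrt (1 + 2 * lam ^ 2 * γ ^ 2))) ν := by
    have := ((hasDerivAt_id ν).const_mul (2 * γ ^ 2)).mul_const
      (erf (lam * Real.sqrt ((d : ℝ) / 2) * κ / Real.sqrt (1 + 2 * lam ^ 2 * γ ^ 2)))
    exact this.congr_deriv (by ring)
  have h2 := (((h1.const_sub (γ ^ 2)).add_const
      (γ ^ 2 * zeta (lam * Real.sqrt ((d : ℝ) / 2) * κ) (lam ^ 2 * γ ^ 2))).add_const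
      (((L : ℝ) - 1) * zeta 0 (lam ^ 2))).add_const (ε ^ 2)
  exact h2

lemma dvR_eq (d L : ℕ) (γ lam ε κ ν : ℝ) :
    dvR d L γ lam ε κ ν = -(2 * γ ^ 2 * erf (lam * Real.sqrt ((d : ℝ) / 2) * κ /
        Real.sqrt (1 + 2 * lam ^ 2 * γ ^ 2))) :=
  (hasDerivAt_Rred_v d L γ lam ε κ ν).deriv

lemma hasDerivAt_Rred_k (d L : ℕ) (γ lam ε κ ν : ℝ) :
    HasDerivAt (fun x => Rred d L γ lam ε x ν)
      (-(2 * γ ^ 2 * ν * (Eg (lam * Real.sqrt ((d : ℝ) / 2) * κ /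
            Real.sqrt (1 + 2 * lam ^ 2 * γ ^ 2)) *
          (lam * Real.sqrt ((d : ℝ) / 2) / Real.sqrt (1 + 2 * lam ^ 2 * γ ^ 2))))
        + γ ^ 2 * (Df (gaussianReal 0 (lam ^ 2 * γ ^ 2).toNNReal)
            (lam * Real.sqrt ((d : ℝ) / 2) * κ) * (lam * Real.sqrt ((d : ℝ) / 2)))) κ := by
  have hinner : HasDerivAt (fun x : ℝ => lam * Real.sqrt ((d : ℝ) / 2) * x /
        Real.sqrt (1 + 2 * lam ^ 2 * γ ^ 2))
      (lam * Real.sqrt ((d : ℝ) / 2) / Real.sqrt (1 + 2 * lam ^ 2 * γ ^ 2)) κ := by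
    have := ((hasDerivAt_id κ).const_mul (lam * Real.sqrt ((d : ℝ) / 2))).div_const
      (Real.sqrt (1 + 2 * lam ^ 2 * γ ^ 2))
    exact this.congr_deriv (by ring)
  have herf : HasDerivAt (fun x : ℝ => erf (lam * Real.sqrt ((d : ℝ) / 2) * x /
        Real.sqrt (1 + 2 * lam ^ 2 * γ ^ 2)))
      (Eg (lam * Real.sqrt ((d : ℝ) / 2) * κ / Real.sqrt (1 + 2 * lam ^ 2 * γ ^ 2)) *
        (lam * Real.sqrt ((d : ℝ) / 2) / Real.sqrt (1 + 2 * lam ^ 2 * γ ^ 2))) κ := by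
    have := (hasDerivAt_erf (lam * Real.sqrt ((d : ℝ) / 2) * κ /
        Real.sqrt (1 + 2 * lam ^ 2 * γ ^ 2))).comp κ hinner
    simpa [Function.comp_def] using this
  have hinner2 : HasDerivAt (fun x : ℝ => lam * Real.sqrt ((d : ℝ) / 2) * x)
      (lam * Real.sqrt ((d : ℝ) / 2)) κ := by
    simpa using (hasDerivAt_id κ).const_mul (lam * Real.sqrt ((d : ℝ) / 2))
  have hz : HasDerivAt (fun x : ℝ => zeta (lam * Real.sqrt ((d : ℝ) / 2) * x) (lam ^ 2 * γ ^ 2))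
      (Df (gaussianReal 0 (lam ^ 2 * γ ^ 2).toNNReal) (lam * Real.sqrt ((d : ℝ) / 2) * κ) *
        (lam * Real.sqrt ((d : ℝ) / 2))) κ := by
    have := (hasDerivAt_Zf (gaussianReal 0 (lam ^ 2 * γ ^ 2).toNNReal)
        (lam * Real.sqrt ((d : ℝ) / 2) * κ)).comp κ hinner2
    simpa [Function.comp_def, Zf, zeta] using this
  have h := ((((herf.const_mul (2 * γ ^ 2 * ν)).const_sub (γ ^ 2)).add
      (hz.const_mul (γ ^ 2))).add_const (((L : ℝ) - 1) * zeta 0 (lam ^ 2))).add_const (ε ^ 2)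
  exact h

lemma dkR_eq (d L : ℕ) (γ lam ε κ ν : ℝ) :
    dkR d L γ lam ε κ ν
      = -(2 * γ ^ 2 * ν * (Eg (lam * Real.sqrt ((d : ℝ) / 2) * κ /
            Real.sqrt (1 + 2 * lam ^ 2 * γ ^ 2)) *
          (lam * Real.sqrt ((d : ℝ) / 2) / Real.sqrt (1 + 2 * lam ^ 2 * γ ^ 2))))
        + γ ^ 2 * (Df (gaussianReal 0 (lam ^ 2 * γ ^ 2).toNNReal)
            (lam * Real.sqrt ((d : ℝ) / 2) * κ) * (lam * Real.sqrt ((d : ℝ) / 2))) :=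
  (hasDerivAt_Rred_k d L γ lam ε κ ν).deriv

section bounds
variable (d L : ℕ) (γ lam ε : ℝ)

lemma one_le_s2 : 1 ≤ Real.sqrt (1 + 2 * lam ^ 2 * γ ^ 2) := by
  have h : (1:ℝ) ≤ 1 + 2 * lam ^ 2 * γ ^ 2 := by nlinarith [sq_nonneg (lam * γ)]
  simpa using Real.sqrt_le_sqrt h

lemma abs_arg_diff (hlam : 0 ≤ lam) (κ κ' : ℝ) :
    |lam * Real.sqrt ((d : ℝ) / 2) * κ / Real.sqrt (1 + 2 * lam ^ 2 * γ ^ 2)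
      - lam * Real.sqrt ((d : ℝ) / 2) * κ' / Real.sqrt (1 + 2 * lam ^ 2 * γ ^ 2)|
      = lam * Real.sqrt ((d : ℝ) / 2) / Real.sqrt (1 + 2 * lam ^ 2 * γ ^ 2) * |κ - κ'| := by
  rw [show lam * Real.sqrt ((d : ℝ) / 2) * κ / Real.sqrt (1 + 2 * lam ^ 2 * γ ^ 2)
      - lam * Real.sqrt ((d : ℝ) / 2) * κ' / Real.sqrt (1 + 2 * lam ^ 2 * γ ^ 2)
      = (lam * Real.sqrt ((d : ℝ) / 2) / Real.sqrt (1 + 2 * lam ^ 2 * γ ^ 2)) * (κ - κ') from by ring]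
  rw [abs_mul, abs_of_nonneg]
  have h1 : 0 < Real.sqrt (1 + 2 * lam ^ 2 * γ ^ 2) :=
    lt_of_lt_of_le one_pos (one_le_s2 γ lam)
  positivity

lemma dv_bound (κ ν : ℝ) : |dvR d L γ lam ε κ ν| ≤ 4 * γ ^ 2 := by
  rw [dvR_eq, abs_neg, abs_mul]
  have h1 := abs_erf_le_two (lam * Real.sqrt ((d : ℝ) / 2) * κ / Real.sqrt (1 + 2 * lam ^ 2 * γ ^ 2))
  have h2 : |2 * γ ^ 2| = 2 * γ ^ 2 := abs_of_nonneg (by positivity)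
  rw [h2]
  nlinarith [abs_nonneg (erf (lam * Real.sqrt ((d : ℝ) / 2) * κ / Real.sqrt (1 + 2 * lam ^ 2 * γ ^ 2))), sq_nonneg γ]

lemma dv_lip (hlam : 0 ≤ lam) (κ ν κ' ν' : ℝ) :
    |dvR d L γ lam ε κ ν - dvR d L γ lam ε κ' ν'|
      ≤ 4 * γ ^ 2 * (lam * Real.sqrt ((d : ℝ) / 2) / Real.sqrt (1 + 2 * lam ^ 2 * γ ^ 2))
          * |κ - κ'| := by
  rw [dvR_eq, dvR_eq]
  have h1 := erf_lipschitz (lam * Real.sqrt ((d : ℝ) / 2) * κ / Real.sqrt (1 + 2 * lam ^ 2 * γ ^ 2))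
    (lam * Real.sqrt ((d : ℝ) / 2) * κ' / Real.sqrt (1 + 2 * lam ^ 2 * γ ^ 2))
  rw [abs_arg_diff d γ lam hlam] at h1
  have h2 : |-(2 * γ ^ 2 * erf (lam * Real.sqrt ((d : ℝ) / 2) * κ / Real.sqrt (1 + 2 * lam ^ 2 * γ ^ 2)))
      - -(2 * γ ^ 2 * erf (lam * Real.sqrt ((d : ℝ) / 2) * κ' / Real.sqrt (1 + 2 * lam ^ 2 * γ ^ 2)))|
      = 2 * γ ^ 2 * |erf (lam * Real.sqrt ((d : ℝ) / 2) * κ / Real.sqrt (1 + 2 * lam ^ 2 * γ ^ 2))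
          - erf (lam * Real.sqrt ((d : ℝ) / 2) * κ' / Real.sqrt (1 + 2 * lam ^ 2 * γ ^ 2))| := by
    rw [show ∀ a b : ℝ, -a - -b = -(a - b) from fun a b => by ring, abs_neg,
      show ∀ a b : ℝ, 2 * γ ^ 2 * a - 2 * γ ^ 2 * b = 2 * γ ^ 2 * (a - b) from fun a b => by ring,
      abs_mul, abs_of_nonneg (show (0:ℝ) ≤ 2 * γ ^ 2 by positivity)]
  rw [h2]
  nlinarith [sq_nonneg γ, abs_nonneg (erf (lam * Real.sqrt ((d : ℝ) / 2) * κ / Real.sqrt (1 + 2 * lam ^ 2 * γ ^ 2))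
          - erf (lam * Real.sqrt ((d : ℝ) / 2) * κ' / Real.sqrt (1 + 2 * lam ^ 2 * γ ^ 2)))]

end bounds

set_option maxHeartbeats 1000000
section bounds2
variable (d L : ℕ) (γ lam ε : ℝ)

lemma dk_bound (hlam : 0 ≤ lam) (κ ν : ℝ) (hν : |ν| ≤ 1) :
    |dkR d L γ lam ε κ ν|
      ≤ 4 * γ ^ 2 * (lam * Real.sqrt ((d : ℝ) / 2) / Real.sqrt (1 + 2 * lam ^ 2 * γ ^ 2))
        + 8 * γ ^ 2 * (lam * Real.sqrt ((d : ℝ) / 2)) := by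
  have hs2 : (0:ℝ) < Real.sqrt (1 + 2 * lam ^ 2 * γ ^ 2) :=
    lt_of_lt_of_le one_pos (one_le_s2 γ lam)
  set cs := lam * Real.sqrt ((d : ℝ) / 2) with hcs
  have hcs0 : 0 ≤ cs := by positivity
  set c1 := cs / Real.sqrt (1 + 2 * lam ^ 2 * γ ^ 2) with hc1
  have hc10 : 0 ≤ c1 := by positivity
  rw [dkR_eq]
  set A := cs * κ / Real.sqrt (1 + 2 * lam ^ 2 * γ ^ 2) with hA
  set DD := Df (gaussianReal 0 (lam ^ 2 * γ ^ 2).toNNReal) (cs * κ) with hDD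
  have hE := Eg_abs_le A
  have hD : |DD| ≤ 8 := Df_abs_le _ _
  calc |-(2 * γ ^ 2 * ν * (Eg A * c1)) + γ ^ 2 * (DD * cs)|
      ≤ |(2 * γ ^ 2 * ν * (Eg A * c1))| + |γ ^ 2 * (DD * cs)| := by
        have := abs_add_le (-(2 * γ ^ 2 * ν * (Eg A * c1))) (γ ^ 2 * (DD * cs))
        rwa [abs_neg] at this
    _ ≤ 4 * γ ^ 2 * c1 + 8 * γ ^ 2 * cs := by
        have e1 : |2 * γ ^ 2 * ν * (Eg A * c1)| = 2 * γ ^ 2 * (|ν| * (|Eg A| * c1)) := by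
          rw [abs_mul, abs_mul, abs_mul, abs_mul, abs_two, abs_of_nonneg (sq_nonneg γ),
            abs_of_nonneg hc10]
          ring
        have e2 : |γ ^ 2 * (DD * cs)| = γ ^ 2 * (|DD| * cs) := by
          rw [abs_mul, abs_mul, abs_of_nonneg (sq_nonneg γ), abs_of_nonneg hcs0]
        rw [e1, e2]
        have b1 : |ν| * (|Eg A| * c1) ≤ 2 * c1 := by
          nlinarith [abs_nonneg ν, abs_nonneg (Eg A), hν, hE, hc10,
            mul_nonneg (abs_nonneg (Eg A)) hc10]
        have b2 : |DD| * cs ≤ 8 * cs := by nlinarith [hcs0, hD]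
        nlinarith [sq_nonneg γ]

lemma dk_lip (hlam : 0 ≤ lam) (κ ν κ' ν' : ℝ) (hν : |ν| ≤ 1) :
    |dkR d L γ lam ε κ ν - dkR d L γ lam ε κ' ν'|
      ≤ (4 * γ ^ 2 * (lam * Real.sqrt ((d : ℝ) / 2) / Real.sqrt (1 + 2 * lam ^ 2 * γ ^ 2)) ^ 2
          + 4 * γ ^ 2 * (lam * Real.sqrt ((d : ℝ) / 2) / Real.sqrt (1 + 2 * lam ^ 2 * γ ^ 2))
          + 16 * γ ^ 2 * (lam * Real.sqrt ((d : ℝ) / 2)) ^ 2)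
        * max |κ - κ'| |ν - ν'| := by
  have hs2 : (0:ℝ) < Real.sqrt (1 + 2 * lam ^ 2 * γ ^ 2) :=
    lt_of_lt_of_le one_pos (one_le_s2 γ lam)
  set cs := lam * Real.sqrt ((d : ℝ) / 2) with hcs
  have hcs0 : 0 ≤ cs := by positivity
  set c1 := cs / Real.sqrt (1 + 2 * lam ^ 2 * γ ^ 2) with hc1
  have hc10 : 0 ≤ c1 := by positivity
  rw [dkR_eq, dkR_eq]
  set A1 := cs * κ / Real.sqrt (1 + 2 * lam ^ 2 * γ ^ 2) with hA1
  set A2 := cs * κ' / Real.sqrt (1 + 2 * lam ^ 2 * γ ^ 2) with hA2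
  set D1 := Df (gaussianReal 0 (lam ^ 2 * γ ^ 2).toNNReal) (cs * κ) with hD1
  set D2 := Df (gaussianReal 0 (lam ^ 2 * γ ^ 2).toNNReal) (cs * κ') with hD2
  set Dm := max |κ - κ'| |ν - ν'| with hDm
  have hDm1 : |κ - κ'| ≤ Dm := le_max_left _ _
  have hDm2 : |ν - ν'| ≤ Dm := le_max_right _ _
  have hDm0 : 0 ≤ Dm := le_trans (abs_nonneg _) hDm1
  have hElip : |Eg A1 - Eg A2| ≤ 2 * (c1 * |κ - κ'|) := by
    have h := Eg_lipschitz A1 A2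
    have harg0 : A1 - A2 = c1 * (κ - κ') := by rw [hA1, hA2, hc1]; ring
    have harg : |A1 - A2| = c1 * |κ - κ'| := by
      rw [harg0, abs_mul, abs_of_nonneg hc10]
    rwa [harg] at h
  have hDlip : |D1 - D2| ≤ 16 * (cs * |κ - κ'|) := by
    have h := Df_lipschitz (gaussianReal 0 (lam ^ 2 * γ ^ 2).toNNReal) (cs * κ) (cs * κ')
    have harg0 : cs * κ - cs * κ' = cs * (κ - κ') := by ring
    have harg : |cs * κ - cs * κ'| = cs * |κ - κ'| := by
      rw [harg0, abs_mul, abs_of_nonneg hcs0]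
    rwa [harg] at h
  have hmix : |ν * Eg A1 - ν' * Eg A2| ≤ 2 * c1 * Dm + 2 * Dm := by
    have e : ν * Eg A1 - ν' * Eg A2 = ν * (Eg A1 - Eg A2) + (ν - ν') * Eg A2 := by ring
    rw [e]
    have t1 : |ν * (Eg A1 - Eg A2)| ≤ 2 * c1 * Dm := by
      rw [abs_mul]
      nlinarith [abs_nonneg ν, abs_nonneg (Eg A1 - Eg A2), hν, hElip, hc10, hDm1, hDm0,
        mul_nonneg hc10 hDm0]
    have t2 : |(ν - ν') * Eg A2| ≤ 2 * Dm := by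
      rw [abs_mul]
      nlinarith [abs_nonneg (ν - ν'), abs_nonneg (Eg A2), Eg_abs_le A2, hDm2, hDm0]
    calc |ν * (Eg A1 - Eg A2) + (ν - ν') * Eg A2|
        ≤ |ν * (Eg A1 - Eg A2)| + |(ν - ν') * Eg A2| := abs_add_le _ _
      _ ≤ 2 * c1 * Dm + 2 * Dm := by linarith
  have e : -(2 * γ ^ 2 * ν * (Eg A1 * c1)) + γ ^ 2 * (D1 * cs)
        - (-(2 * γ ^ 2 * ν' * (Eg A2 * c1)) + γ ^ 2 * (D2 * cs))
      = -(2 * γ ^ 2 * c1) * (ν * Eg A1 - ν' * Eg A2) + γ ^ 2 * cs * (D1 - D2) := by ring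
  rw [e]
  calc |(-(2 * γ ^ 2 * c1)) * (ν * Eg A1 - ν' * Eg A2) + γ ^ 2 * cs * (D1 - D2)|
      ≤ |(-(2 * γ ^ 2 * c1)) * (ν * Eg A1 - ν' * Eg A2)| + |γ ^ 2 * cs * (D1 - D2)| := abs_add_le _ _
    _ ≤ 2 * γ ^ 2 * c1 * (2 * c1 * Dm + 2 * Dm) + γ ^ 2 * cs * (16 * (cs * Dm)) := by
        have e1 : |(-(2 * γ ^ 2 * c1)) * (ν * Eg A1 - ν' * Eg A2)|
            = 2 * γ ^ 2 * c1 * |ν * Eg A1 - ν' * Eg A2| := by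
          rw [abs_mul, abs_neg, abs_of_nonneg (show (0:ℝ) ≤ 2 * γ ^ 2 * c1 by positivity)]
        have e2 : |γ ^ 2 * cs * (D1 - D2)| = γ ^ 2 * cs * |D1 - D2| := by
          rw [abs_mul, abs_of_nonneg (show (0:ℝ) ≤ γ ^ 2 * cs by positivity)]
        rw [e1, e2]
        have b1 : 2 * γ ^ 2 * c1 * |ν * Eg A1 - ν' * Eg A2|
            ≤ 2 * γ ^ 2 * c1 * (2 * c1 * Dm + 2 * Dm) :=
          mul_le_mul_of_nonneg_left hmix (by positivity)
        have b2 : γ ^ 2 * cs * |D1 - D2| ≤ γ ^ 2 * cs * (16 * (cs * Dm)) := by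
          apply mul_le_mul_of_nonneg_left _ (by positivity)
          calc |D1 - D2| ≤ 16 * (cs * |κ - κ'|) := hDlip
            _ ≤ 16 * (cs * Dm) := by nlinarith [hcs0, hDm1]
        linarith
    _ ≤ (4 * γ ^ 2 * c1 ^ 2 + 4 * γ ^ 2 * c1 + 16 * γ ^ 2 * cs ^ 2) * Dm := by nlinarith [sq_nonneg γ]

end bounds2

lemma keyest_aux (α M K Cc Dm : ℝ) (hCc : Cc = 7 * M + 2 * K) (hDm0 : 0 ≤ Dm)
    (x y a b : ℝ) (hx : x ∈ Set.Icc (-1:ℝ) 1) (hy : y ∈ Set.Icc (-1:ℝ) 1)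
    (haM : |a| ≤ α * M) (ha1 : |a| ≤ 1) (hb1 : |b| ≤ 1)
    (hab : |a - b| ≤ α * (K * Dm)) (hxy : |x - y| ≤ Dm)
    (heqq : Phi x a = Phi y b) : |x - y| ≤ α * Cc * Dm := by
  have t1 : |Phi x a - Phi y a - (x - y)| ≤ 7 * |a| * |x - y| := Phi_pert_x a ha1 x y hx hy
  have t2 : |Phi y a - Phi y b| ≤ 2 * |a - b| := Phi_lipschitz_a y hy a b ha1 hb1
  have e2 : |x - y| ≤ |Phi x a - Phi y a - (x - y)| + |Phi y a - Phi y b| := by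
    have tri := abs_add_le (Phi x a - Phi y a - (x - y)) (Phi y a - Phi y b)
    have e3 : (Phi x a - Phi y a - (x - y)) + (Phi y a - Phi y b) = -(x - y) := by
      rw [heqq]; ring
    rw [e3, abs_neg] at tri
    linarith
  have t1' : 7 * |a| * |x - y| ≤ 7 * (α * M) * Dm := by
    nlinarith [abs_nonneg a, abs_nonneg (x - y)]
  have t2' : 2 * |a - b| ≤ 2 * (α * (K * Dm)) := by linarith
  calc |x - y| ≤ 7 * (α * M) * Dm + 2 * (α * (K * Dm)) := by linarith
    _ = α * Cc * Dm := by rw [hCc]; ring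

set_option maxHeartbeats 1000000 in
/-- For small enough step size, the PGD map `g_α` is injective on `[−1,1]²`. -/
theorem stmt11 (d L : ℕ) (hd : 1 ≤ d) (hL : 1 ≤ L) (γ lam ε : ℝ)
    (hγ : 0 < γ) (hlam : 0 < lam) (hε : 0 ≤ ε) :
    ∃ abar : ℝ, 0 < abar ∧ ∀ α : ℝ, 0 < α → α ≤ abar →
      Set.InjOn (pgd d L γ lam ε α) sqIcc := by
  obtain ⟨cs, hcs⟩ : ∃ x : ℝ, x = lam * Real.sqrt ((d : ℝ) / 2) := ⟨_, rfl⟩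
  obtain ⟨c1, hc1⟩ : ∃ x : ℝ, x = cs / Real.sqrt (1 + 2 * lam ^ 2 * γ ^ 2) := ⟨_, rfl⟩
  have hcs0 : 0 ≤ cs := by rw [hcs]; positivity
  have hc10 : 0 ≤ c1 := by rw [hc1]; exact div_nonneg hcs0 (Real.sqrt_nonneg _)
  -- folded versions of the bounds
  have dkb : ∀ κ ν : ℝ, |ν| ≤ 1 →
      |dkR d L γ lam ε κ ν| ≤ 4 * γ ^ 2 * c1 + 8 * γ ^ 2 * cs := by
    intro κ ν hν; rw [hc1, hcs]; exact dk_bound d L γ lam ε hlam.le κ ν hν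
  have dvb : ∀ κ ν : ℝ, |dvR d L γ lam ε κ ν| ≤ 4 * γ ^ 2 := fun κ ν => dv_bound d L γ lam ε κ ν
  have dkl : ∀ κ ν κ' ν' : ℝ, |ν| ≤ 1 →
      |dkR d L γ lam ε κ ν - dkR d L γ lam ε κ' ν'|
        ≤ (4 * γ ^ 2 * c1 ^ 2 + 4 * γ ^ 2 * c1 + 16 * γ ^ 2 * cs ^ 2) * max |κ - κ'| |ν - ν'| := by
    intro κ ν κ' ν' hν; rw [hc1, hcs]; exact dk_lip d L γ lam ε hlam.le κ ν κ' ν' hν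
  have dvl : ∀ κ ν κ' ν' : ℝ,
      |dvR d L γ lam ε κ ν - dvR d L γ lam ε κ' ν'| ≤ 4 * γ ^ 2 * c1 * |κ - κ'| := by
    intro κ ν κ' ν'; rw [hc1, hcs]; exact dv_lip d L γ lam ε hlam.le κ ν κ' ν'
  obtain ⟨M, hM⟩ : ∃ x : ℝ, x = (4 * γ ^ 2 * c1 + 8 * γ ^ 2 * cs) + 4 * γ ^ 2 + 1 := ⟨_, rfl⟩
  obtain ⟨K, hK⟩ : ∃ x : ℝ,
      x = (4 * γ ^ 2 * c1 ^ 2 + 4 * γ ^ 2 * c1 + 16 * γ ^ 2 * cs ^ 2) + 4 * γ ^ 2 * c1 + 1 := ⟨_, rfl⟩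
  obtain ⟨Cc, hCc⟩ : ∃ x : ℝ, x = 7 * M + 2 * K := ⟨_, rfl⟩
  have hγ2 : 0 ≤ γ ^ 2 := sq_nonneg γ
  have hM1 : (1:ℝ) ≤ M := by
    rw [hM]
    nlinarith [mul_nonneg hγ2 hc10, mul_nonneg hγ2 hcs0]
  have hK1 : (1:ℝ) ≤ K := by
    rw [hK]
    nlinarith [mul_nonneg hγ2 hc10, mul_nonneg hγ2 (sq_nonneg cs), mul_nonneg hγ2 (sq_nonneg c1)]
  have hM0 : (0:ℝ) < M := lt_of_lt_of_le one_pos hM1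
  have hK0 : (0:ℝ) < K := lt_of_lt_of_le one_pos hK1
  have hCc0 : (0:ℝ) < Cc := by rw [hCc]; linarith
  refine ⟨min (1 / M) (1 / (2 * Cc)), by positivity, ?_⟩
  intro α hα hαle p hp q hq hpq
  obtain ⟨hp1, hp2⟩ := hp
  obtain ⟨hq1, hq2⟩ := hq
  have hαM : α * M ≤ 1 := by
    have h := le_trans hαle (min_le_left _ _)
    rw [le_div_iff₀ hM0] at h
    linarith
  have hαC : α * Cc ≤ 1 / 2 := by
    have h := le_trans hαle (min_le_right _ _)
    rw [le_div_iff₀ (by positivity : (0:ℝ) < 2 * Cc)] at h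
    linarith
  set Bp := dkR d L γ lam ε p.1 p.2 with hBp'
  set Bq := dkR d L γ lam ε q.1 q.2 with hBq'
  set Vp := dvR d L γ lam ε p.1 p.2 with hVp'
  set Vq := dvR d L γ lam ε q.1 q.2 with hVq'
  have hp2' : |p.2| ≤ 1 := abs_le.2 ⟨hp2.1, hp2.2⟩
  have hq2' : |q.2| ≤ 1 := abs_le.2 ⟨hq2.1, hq2.2⟩
  have hBpb : |Bp| ≤ M := le_trans (dkb p.1 p.2 hp2') (by rw [hM]; nlinarith)
  have hBqb : |Bq| ≤ M := le_trans (dkb q.1 q.2 hq2') (by rw [hM]; nlinarith)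
  have hVpb : |Vp| ≤ M :=
    le_trans (dvb p.1 p.2) (by rw [hM]; nlinarith [mul_nonneg hγ2 hc10, mul_nonneg hγ2 hcs0])
  have hVqb : |Vq| ≤ M :=
    le_trans (dvb q.1 q.2) (by rw [hM]; nlinarith [mul_nonneg hγ2 hc10, mul_nonneg hγ2 hcs0])
  set Dm := max |p.1 - q.1| |p.2 - q.2| with hDm
  have hDm1 : |p.1 - q.1| ≤ Dm := le_max_left _ _
  have hDm2 : |p.2 - q.2| ≤ Dm := le_max_right _ _
  have hDm0 : 0 ≤ Dm := le_trans (abs_nonneg _) hDm1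
  have hBlip : |Bp - Bq| ≤ K * Dm := by
    refine le_trans (dkl p.1 p.2 q.1 q.2 hp2') ?_
    apply mul_le_mul_of_nonneg_right _ hDm0
    rw [hK]
    nlinarith [mul_nonneg hγ2 hc10]
  have hVlip : |Vp - Vq| ≤ K * Dm := by
    refine le_trans (dvl p.1 p.2 q.1 q.2) ?_
    calc 4 * γ ^ 2 * c1 * |p.1 - q.1| ≤ 4 * γ ^ 2 * c1 * Dm := by
          apply mul_le_mul_of_nonneg_left hDm1
          positivity
      _ ≤ K * Dm := by
          apply mul_le_mul_of_nonneg_right _ hDm0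
          rw [hK]
          nlinarith [mul_nonneg hγ2 (sq_nonneg c1), mul_nonneg hγ2 (sq_nonneg cs),
            mul_nonneg hγ2 hc10]
  have habs : ∀ X : ℝ, |X| ≤ M → |α * X| ≤ α * M ∧ |α * X| ≤ 1 := by
    intro X hX
    have h1 : |α * X| = α * |X| := by rw [abs_mul, abs_of_pos hα]
    refine ⟨by rw [h1]; exact mul_le_mul_of_nonneg_left hX hα.le, ?_⟩
    rw [h1]
    nlinarith [abs_nonneg X]
  have hfstp : (pgd d L γ lam ε α p).1 = Phi p.1 (α * Bp) := by
    simp only [pgd, Phi, mul_pow, hBp']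
  have hfstq : (pgd d L γ lam ε α q).1 = Phi q.1 (α * Bq) := by
    simp only [pgd, Phi, mul_pow, hBq']
  have hsndp : (pgd d L γ lam ε α p).2 = Phi p.2 (α * Vp) := by
    simp only [pgd, Phi, mul_pow, hVp']
  have hsndq : (pgd d L γ lam ε α q).2 = Phi q.2 (α * Vq) := by
    simp only [pgd, Phi, mul_pow, hVq']
  have h1 : Phi p.1 (α * Bp) = Phi q.1 (α * Bq) := by rw [← hfstp, ← hfstq, hpq]
  have h2 : Phi p.2 (α * Vp) = Phi q.2 (α * Vq) := by rw [← hsndp, ← hsndq, hpq]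
  have keyest : ∀ x y a b : ℝ, x ∈ Set.Icc (-1:ℝ) 1 → y ∈ Set.Icc (-1:ℝ) 1 →
      |a| ≤ α * M → |a| ≤ 1 → |b| ≤ 1 → |a - b| ≤ α * (K * Dm) → |x - y| ≤ Dm →
      Phi x a = Phi y b → |x - y| ≤ α * Cc * Dm := fun x y a b hx hy haM ha1 hb1 hab hxy heqq =>
    keyest_aux α M K Cc Dm hCc hDm0 x y a b hx hy haM ha1 hb1 hab hxy heqq
  have est1 : |p.1 - q.1| ≤ α * Cc * Dm := by
    refine keyest p.1 q.1 (α * Bp) (α * Bq) hp1 hq1 (habs Bp hBpb).1 (habs Bp hBpb).2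
      (habs Bq hBqb).2 ?_ hDm1 h1
    rw [show α * Bp - α * Bq = α * (Bp - Bq) from by ring, abs_mul, abs_of_pos hα]
    exact mul_le_mul_of_nonneg_left hBlip hα.le
  have est2 : |p.2 - q.2| ≤ α * Cc * Dm := by
    refine keyest p.2 q.2 (α * Vp) (α * Vq) hp2 hq2 (habs Vp hVpb).1 (habs Vp hVpb).2
      (habs Vq hVqb).2 ?_ hDm2 h2
    rw [show α * Vp - α * Vq = α * (Vp - Vq) from by ring, abs_mul, abs_of_pos hα]
    exact mul_le_mul_of_nonneg_left hVlip hα.le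
  have hDmle : Dm ≤ α * Cc * Dm := max_le est1 est2
  have hhalf : α * Cc * Dm ≤ 1 / 2 * Dm := by nlinarith
  have hDm00 : Dm ≤ 0 := by linarith
  have hz1 : p.1 = q.1 := by
    have := le_antisymm (le_trans hDm1 hDm00) (abs_nonneg _)
    have := abs_eq_zero.1 this
    linarith
  have hz2 : p.2 = q.2 := by
    have := le_antisymm (le_trans hDm2 hDm00) (abs_nonneg _)
    have := abs_eq_zero.1 this
    linarith
  exact Prod.ext hz1 hz2
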